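/- Let α be a quadratic irrational of height H with δ_𝒞(α) ≥ 0.02 and finite exit time. Suppose that the number of R-blocks in the orbit (θ_N) before exit — i.e. the number of indices n < exit(α) with θ_n ∈ R and (n = 0 or θ_{n−1} ∉ R) — is at most B₀ for an absolute constant B₀. Then there exist constants C₁, C₂ > 0 depending only on B₀ such that exit(α) ≤ C₁ log₃ H + C₂. -/

import Mathlib

/-- θ_n(α) = {3^n α}, the fractional part of 3^n α. -/
noncomputable def theta (α : ℝ) (n : ℕ) : ℝ := Int.fract (3 ^ n * α)

lemma theta_succ (α : ℝ) (s : ℕ) : theta α (s + 1) = Int.fract (3 * theta α s) := by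
  unfold theta
  have h : (3:ℝ) ^ (s + 1) * α = 3 * (3 ^ s * α) := by ring
  rw [h, Int.fract_eq_fract]
  exact ⟨3 * ⌊(3:ℝ) ^ s * α⌋, by rw [Int.fract]; push_cast; ring⟩

lemma runL_aux (α : ℝ) : ∀ (ℓ s : ℕ), (∀ i < ℓ, theta α (s + i) < 1/3) →
    theta α s ≤ (1/3) ^ ℓ := by
  intro ℓ
  induction ℓ with
  | zero => intro s _; simpa [theta] using (Int.fract_lt_one ((3:ℝ) ^ s * α)).le
  | succ n ih =>
    intro s h
    have h0 : theta α s < 1/3 := by simpa using h 0 (Nat.succ_pos n)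
    have h0' : 0 ≤ theta α s := Int.fract_nonneg _
    have h1 : theta α (s + 1) ≤ (1/3) ^ n := by
      apply ih
      intro i hi
      have heq : s + 1 + i = s + (i + 1) := by omega
      rw [heq]
      exact h (i + 1) (by omega)
    have h2 : theta α (s + 1) = 3 * theta α s := by
      rw [theta_succ]
      exact Int.fract_eq_self.mpr ⟨by linarith, by linarith⟩
    have h3 : (1/3:ℝ) ^ (n + 1) = (1/3) ^ n * (1/3) := pow_succ _ _
    rw [h2] at h1
    rw [h3]
    linarith

lemma runR_aux (α : ℝ) : ∀ (ℓ s : ℕ), (∀ i < ℓ, theta α (s + i) ∈ Set.Ico (2/3 : ℝ) 1) →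
    1 - (1/3) ^ ℓ ≤ theta α s := by
  intro ℓ
  induction ℓ with
  | zero =>
    intro s _
    simp only [pow_zero, sub_self]
    exact Int.fract_nonneg _
  | succ n ih =>
    intro s h
    have h0 : theta α s ∈ Set.Ico (2/3 : ℝ) 1 := by simpa using h 0 (Nat.succ_pos n)
    obtain ⟨h0a, h0b⟩ := h0
    have h1 : 1 - (1/3) ^ n ≤ theta α (s + 1) := by
      apply ih
      intro i hi
      have heq : s + 1 + i = s + (i + 1) := by omega
      rw [heq]
      exact h (i + 1) (by omega)
    have h2 : theta α (s + 1) = 3 * theta α s - 2 := by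
      rw [theta_succ]
      have : Int.fract (3 * theta α s) = Int.fract (3 * theta α s - 2) := by
        rw [Int.fract_eq_fract]; exact ⟨2, by push_cast; ring⟩
      rw [this]
      exact Int.fract_eq_self.mpr ⟨by linarith, by linarith⟩
    have h3 : (1/3:ℝ) ^ (n + 1) = (1/3) ^ n * (1/3) := pow_succ _ _
    rw [h2] at h1
    rw [h3]
    linarith

set_option maxHeartbeats 1000000 in
/-- Conditional logarithmic exit bound under a uniform R-block count: for any
bound B₀ there exist constants C₁, C₂ > 0 (depending only on B₀) such that if
α is a quadratic irrational of height H with δ_𝒞(α) ≥ 0.02 and finite exit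
time E, and the number of R-blocks before exit (indices n < E with θ_n ∈ R
and (n = 0 or θ_{n-1} ∉ R)) is at most B₀, then E ≤ C₁ log₃ H + C₂. -/
theorem stmt18 (B₀ : ℕ) :
    ∃ C₁ C₂ : ℝ, 0 < C₁ ∧ 0 < C₂ ∧
      ∀ (α : ℝ) (a b c : ℤ) (H : ℕ),
        Irrational α → a ≠ 0 →
        (a : ℝ) * α ^ 2 + (b : ℝ) * α + (c : ℝ) = 0 →
        Int.gcd a (Int.gcd b c) = 1 →
        H = max a.natAbs (max b.natAbs c.natAbs) →
        (∀ k : ℕ, k ≤ 9 → |Int.fract α - (k : ℝ) / 9| ≥ 0.02) →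
        ∀ E : ℕ, 1 ≤ E →
          theta α (E - 1) ∈ Set.Ico (1/3 : ℝ) (2/3) →
          (∀ m, m < E - 1 → theta α m ∉ Set.Ico (1/3 : ℝ) (2/3)) →
          ∀ Rb : Finset ℕ,
            (∀ n, n ∈ Rb ↔ n < E ∧ theta α n ∈ Set.Ico (2/3 : ℝ) 1 ∧
              (n = 0 ∨ theta α (n - 1) ∉ Set.Ico (2/3 : ℝ) 1)) →
            Rb.card ≤ B₀ →
            (E : ℝ) ≤ C₁ * Real.logb 3 (H : ℝ) + C₂ := by
  refine ⟨4 ^ (B₀ + 1), 2 * 4 ^ (B₀ + 1) + 1, by positivity, by positivity, ?_⟩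
  intro α a b c H hIrr ha hroot _hgcd hH _hδ E hE hMexit hNoM Rb hRb hRbcard
  classical
  -- basic height facts
  have hH1 : 1 ≤ H := by
    have : 1 ≤ a.natAbs := Int.natAbs_pos.mpr ha
    omega
  have hH1' : (1:ℝ) ≤ H := by exact_mod_cast hH1
  have hHa : |(a:ℝ)| ≤ H := by
    have h1 : a.natAbs ≤ H := by omega
    calc |(a:ℝ)| = ((a.natAbs : ℤ) : ℝ) := by rw [← Int.abs_eq_natAbs, Int.cast_abs]
    _ ≤ H := by exact_mod_cast h1
  have hHb : |(b:ℝ)| ≤ H := by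
    have h1 : b.natAbs ≤ H := by omega
    calc |(b:ℝ)| = ((b.natAbs : ℤ) : ℝ) := by rw [← Int.abs_eq_natAbs, Int.cast_abs]
    _ ≤ H := by exact_mod_cast h1
  have hHc : |(c:ℝ)| ≤ H := by
    have h1 : c.natAbs ≤ H := by omega
    calc |(c:ℝ)| = ((c.natAbs : ℤ) : ℝ) := by rw [← Int.abs_eq_natAbs, Int.cast_abs]
    _ ≤ H := by exact_mod_cast h1
  -- bound on |2aα + b|
  have h2ab : |2 * (a:ℝ) * α + b| ≤ 3 * H := by
    have hsq : (2 * (a:ℝ) * α + b) ^ 2 = (b:ℝ) ^ 2 - 4 * a * c := by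
      linear_combination 4 * (a:ℝ) * hroot
    have hb2 : (b:ℝ) ^ 2 ≤ H ^ 2 := by
      nlinarith [abs_nonneg (b:ℝ), sq_abs (b:ℝ)]
    have hac : |(a:ℝ) * c| ≤ H ^ 2 := by
      rw [abs_mul]
      calc |(a:ℝ)| * |(c:ℝ)| ≤ H * H :=
        mul_le_mul hHa hHc (abs_nonneg _) (by linarith)
      _ = (H:ℝ) ^ 2 := by ring
    have hac' := abs_le.mp hac
    rw [abs_le]
    constructor
    · nlinarith [sq_nonneg (2 * (a:ℝ) * α + b + 3 * H)]
    · nlinarith [sq_nonneg (2 * (a:ℝ) * α + b - 3 * H)]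
  -- Liouville-type lemma
  have lemA : ∀ (s : ℕ) (p : ℤ), 1 / (4 * (H:ℝ) * 3 ^ s) ≤ |3 ^ s * α - (p:ℝ)| := by
    intro s p
    have h3s : (0:ℝ) < 3 ^ s := by positivity
    have h3s1 : (1:ℝ) ≤ 3 ^ s := one_le_pow₀ (by norm_num : (1:ℝ) ≤ 3)
    have hD : (0:ℝ) < 4 * H * 3 ^ s := by positivity
    by_cases h1 : 1 ≤ |3 ^ s * α - (p:ℝ)|
    · have : 1 / (4 * (H:ℝ) * 3 ^ s) ≤ 1 := by
        rw [div_le_one hD]; nlinarith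
      linarith
    · push_neg at h1
      set x : ℝ := 3 ^ s * α - (p:ℝ) with hx
      have hNkey : ((a * p ^ 2 + b * p * 3 ^ s + c * (3 ^ s) ^ 2 : ℤ) : ℝ)
          = ((p:ℝ) - 3 ^ s * α) * ((a:ℝ) * p + b * 3 ^ s + a * 3 ^ s * α) := by
        push_cast
        linear_combination ((3:ℝ) ^ s) ^ 2 * hroot
      have hNne : (a * p ^ 2 + b * p * 3 ^ s + c * (3 ^ s) ^ 2 : ℤ) ≠ 0 := by
        intro h0
        have h0' : ((p:ℝ) - 3 ^ s * α) * ((a:ℝ) * p + b * 3 ^ s + a * 3 ^ s * α) = 0 := by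
          rw [← hNkey, h0]; norm_num
        have h3sQ : ((3:ℚ) ^ s) ≠ 0 := by positivity
        rcases mul_eq_zero.mp h0' with h | h
        · refine hIrr ⟨(p : ℚ) / 3 ^ s, ?_⟩
          push_cast
          rw [div_eq_iff (by positivity : ((3:ℝ) ^ s) ≠ 0)]
          linarith
        · have haQ : ((a:ℚ)) ≠ 0 := Int.cast_ne_zero.mpr ha
          refine hIrr ⟨-((a:ℚ) * p + b * 3 ^ s) / ((a:ℚ) * 3 ^ s), ?_⟩
          push_cast
          rw [div_eq_iff (mul_ne_zero (Int.cast_ne_zero.mpr ha) (by positivity : ((3:ℝ) ^ s) ≠ 0))]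
          linarith
      have hN1 : (1:ℝ) ≤ |((a * p ^ 2 + b * p * 3 ^ s + c * (3 ^ s) ^ 2 : ℤ) : ℝ)| := by
        rw [← Int.cast_abs]
        exact_mod_cast Int.one_le_abs hNne
      have hfac : |(a:ℝ) * p + b * 3 ^ s + a * 3 ^ s * α| ≤ 4 * H * 3 ^ s := by
        have heq : (a:ℝ) * p + b * 3 ^ s + a * 3 ^ s * α
            = (a:ℝ) * ((p:ℝ) - 3 ^ s * α) + 3 ^ s * (2 * a * α + b) := by ring
        rw [heq]
        have habs1 : |(a:ℝ) * ((p:ℝ) - 3 ^ s * α)| ≤ H * 1 := by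
          rw [abs_mul]
          have : |(p:ℝ) - 3 ^ s * α| = |x| := by rw [hx, abs_sub_comm]
          rw [this]
          exact mul_le_mul hHa h1.le (abs_nonneg _) (by linarith)
        have habs2 : |(3:ℝ) ^ s * (2 * a * α + b)| ≤ 3 ^ s * (3 * H) := by
          rw [abs_mul, abs_of_pos h3s]
          exact mul_le_mul_of_nonneg_left h2ab h3s.le
        calc |(a:ℝ) * ((p:ℝ) - 3 ^ s * α) + 3 ^ s * (2 * a * α + b)|
            ≤ |(a:ℝ) * ((p:ℝ) - 3 ^ s * α)| + |(3:ℝ) ^ s * (2 * a * α + b)| := abs_add_le _ _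
        _ ≤ H * 1 + 3 ^ s * (3 * H) := add_le_add habs1 habs2
        _ ≤ 4 * H * 3 ^ s := by nlinarith
      have hprod : (1:ℝ) ≤ |x| * (4 * H * 3 ^ s) := by
        have h2 : |((a * p ^ 2 + b * p * 3 ^ s + c * (3 ^ s) ^ 2 : ℤ) : ℝ)|
            = |x| * |(a:ℝ) * p + b * 3 ^ s + a * 3 ^ s * α| := by
          rw [hNkey, abs_mul]
          congr 1
          rw [hx, abs_sub_comm]
        rw [h2] at hN1
        calc (1:ℝ) ≤ |x| * |(a:ℝ) * p + b * 3 ^ s + a * 3 ^ s * α| := hN1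
        _ ≤ |x| * (4 * H * 3 ^ s) := mul_le_mul_of_nonneg_left hfac (abs_nonneg _)
      rw [div_le_iff₀ hD]
      linarith
  -- the key constant
  set K : ℝ := Real.logb 3 (4 * H) with hK
  have hK0 : 0 ≤ K := Real.logb_nonneg (by norm_num) (by linarith)
  have h31 : (1:ℝ) < 3 := by norm_num
  -- length bound from Liouville
  have powb : ∀ (s ℓ : ℕ), 1 / (4 * (H:ℝ) * 3 ^ s) ≤ (1/3) ^ ℓ → (ℓ:ℝ) ≤ s + K := by
    intro s ℓ h
    have h3s : (0:ℝ) < 3 ^ s := by positivity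
    have hD : (0:ℝ) < 4 * (H:ℝ) * 3 ^ s := by positivity
    have h13 : ((1:ℝ)/3) ^ ℓ = 1 / 3 ^ ℓ := by rw [div_pow, one_pow]
    rw [h13] at h
    have hle : (3:ℝ) ^ ℓ ≤ 4 * H * 3 ^ s := le_of_one_div_le_one_div hD h
    have hlogb : (ℓ:ℝ) ≤ Real.logb 3 (4 * H * 3 ^ s) := by
      rw [Real.le_logb_iff_rpow_le h31 hD, Real.rpow_natCast]
      exact hle
    have hps : Real.logb 3 ((3:ℝ) ^ s) = s := by
      rw [Real.logb_pow, Real.logb_self_eq_one h31, mul_one]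
    have hsplit : Real.logb 3 (4 * (H:ℝ) * 3 ^ s) = K + s := by
      rw [Real.logb_mul (by positivity) (by positivity), hps, hK]
    linarith [hlogb, hsplit.symm.le]
  -- basic facts about theta
  have ht0 : ∀ n, 0 ≤ theta α n := fun n => Int.fract_nonneg _
  have ht1 : ∀ n, theta α n < 1 := fun n => Int.fract_lt_one _
  -- a maximal R-run
  have runR : ∀ s, s < E - 1 → theta α s ∈ Set.Ico (2/3 : ℝ) 1 →
      ∃ t : ℕ, s < t ∧ t ≤ E - 1 ∧ ((t:ℝ) ≤ 2 * s + K) ∧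
        theta α t ∉ Set.Ico (2/3 : ℝ) 1 := by
    intro s hs hθ
    have hex : ∃ i, s + i = E - 1 ∨ theta α (s + i) ∉ Set.Ico (2/3 : ℝ) 1 :=
      ⟨E - 1 - s, Or.inl (by omega)⟩
    set ℓ := Nat.find hex with hℓ
    have hspec : s + ℓ = E - 1 ∨ theta α (s + ℓ) ∉ Set.Ico (2/3 : ℝ) 1 := Nat.find_spec hex
    have hrun : ∀ i < ℓ, theta α (s + i) ∈ Set.Ico (2/3 : ℝ) 1 := by
      intro i hi
      have := Nat.find_min hex hi
      push_neg at this
      exact this.2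
    have hℓpos : 1 ≤ ℓ := by
      rcases Nat.eq_zero_or_pos ℓ with h0 | h0
      · exfalso
        rw [h0] at hspec
        simp only [Nat.add_zero] at hspec
        rcases hspec with h | h
        · omega
        · exact h hθ
      · exact h0
    have hℓle : ℓ ≤ E - 1 - s := Nat.find_le (Or.inl (by omega))
    have hθs : 1 - (1/3) ^ ℓ ≤ theta α s := runR_aux α ℓ s hrun
    -- Liouville bound
    have hA := lemA s (⌊(3:ℝ) ^ s * α⌋ + 1)
    have habs : |(3:ℝ) ^ s * α - ((⌊(3:ℝ) ^ s * α⌋ + 1 : ℤ) : ℝ)| = 1 - theta α s := by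
      have hts : theta α s = (3:ℝ) ^ s * α - ⌊(3:ℝ) ^ s * α⌋ := rfl
      have h1 : (3:ℝ) ^ s * α - ((⌊(3:ℝ) ^ s * α⌋ + 1 : ℤ) : ℝ) = theta α s - 1 := by
        push_cast
        rw [hts]; ring
      rw [h1, abs_of_nonpos (by linarith [ht1 s]), neg_sub]
    rw [habs] at hA
    have hℓK : (ℓ:ℝ) ≤ s + K := powb s ℓ (by linarith)
    refine ⟨s + ℓ, by omega, by omega, ?_, ?_⟩
    · push_cast; linarith
    · rcases hspec with h | h
      · rw [h]
        intro hmem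
        exact absurd hMexit.2 (not_lt.mpr hmem.1)
      · exact h
  -- a maximal L-run
  have runL : ∀ s, s < E - 1 → theta α s < 1/3 →
      ∃ t : ℕ, s < t ∧ t ≤ E - 1 ∧ ((t:ℝ) ≤ 2 * s + K) ∧
        (t = E - 1 ∨ (theta α t ∈ Set.Ico (2/3 : ℝ) 1 ∧ t ∈ Rb)) := by
    intro s hs hθ
    have hex : ∃ i, s + i = E - 1 ∨ ¬ (theta α (s + i) < 1/3) :=
      ⟨E - 1 - s, Or.inl (by omega)⟩
    set ℓ := Nat.find hex with hℓ
    have hspec : s + ℓ = E - 1 ∨ ¬ (theta α (s + ℓ) < 1/3) := Nat.find_spec hex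
    have hrun : ∀ i < ℓ, theta α (s + i) < 1/3 := by
      intro i hi
      have := Nat.find_min hex hi
      push_neg at this
      exact this.2
    have hℓpos : 1 ≤ ℓ := by
      rcases Nat.eq_zero_or_pos ℓ with h0 | h0
      · exfalso
        rw [h0] at hspec
        simp only [Nat.add_zero] at hspec
        rcases hspec with h | h
        · omega
        · exact h hθ
      · exact h0
    have hℓle : ℓ ≤ E - 1 - s := Nat.find_le (Or.inl (by omega))
    have hθs : theta α s ≤ (1/3) ^ ℓ := runL_aux α ℓ s hrun
    have hA := lemA s ⌊(3:ℝ) ^ s * α⌋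
    have habs : |(3:ℝ) ^ s * α - ((⌊(3:ℝ) ^ s * α⌋ : ℤ) : ℝ)| = theta α s := by
      have hts : theta α s = (3:ℝ) ^ s * α - ⌊(3:ℝ) ^ s * α⌋ := rfl
      rw [← hts, abs_of_nonneg (ht0 s)]
    rw [habs] at hA
    have hℓK : (ℓ:ℝ) ≤ s + K := powb s ℓ (by linarith)
    refine ⟨s + ℓ, by omega, by omega, by push_cast; linarith, ?_⟩
    by_cases hend : s + ℓ = E - 1
    · exact Or.inl hend
    · right
      have hlt : s + ℓ < E - 1 := by omega
      have hnotlt : ¬ (theta α (s + ℓ) < 1/3) := by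
        rcases hspec with h | h
        · omega
        · exact h
      push_neg at hnotlt
      have hnotM := hNoM (s + ℓ) hlt
      simp only [Set.mem_Ico, not_and, not_lt] at hnotM
      have hge : 2/3 ≤ theta α (s + ℓ) := hnotM hnotlt
      have hmem : theta α (s + ℓ) ∈ Set.Ico (2/3 : ℝ) 1 := ⟨hge, ht1 _⟩
      refine ⟨hmem, (hRb (s + ℓ)).mpr ⟨by omega, hmem, Or.inr ?_⟩⟩
      have hprev : theta α (s + (ℓ - 1)) < 1/3 := hrun (ℓ - 1) (by omega)
      have heq : s + ℓ - 1 = s + (ℓ - 1) := by omega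
      rw [heq]
      intro hmem'
      linarith [hmem'.1]
  -- card decrease helper
  have cardlt : ∀ (s t x : ℕ), x ∈ Rb → s ≤ x → x < t →
      (Rb.filter (fun n => t ≤ n)).card < (Rb.filter (fun n => s ≤ n)).card := by
    intro s t x hx hsx hxt
    apply Finset.card_lt_card
    rw [Finset.ssubset_iff_of_subset]
    · exact ⟨x, Finset.mem_filter.mpr ⟨hx, hsx⟩, fun hmem => by
        have := (Finset.mem_filter.mp hmem).2; omega⟩
    · intro n hn
      have hn' := Finset.mem_filter.mp hn
      exact Finset.mem_filter.mpr ⟨hn'.1, by omega⟩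
  -- main induction
  have main : ∀ (d s : ℕ), E - 1 - s ≤ d → s ≤ E - 1 →
      (theta α s ∈ Set.Ico (2/3 : ℝ) 1 → s ∈ Rb) →
      ((E:ℝ) - 1) ≤ 4 ^ ((Rb.filter (fun n => s ≤ n)).card + 1) * ((s:ℝ) + K) := by
    intro d
    induction d with
    | zero =>
      intro s hd hs _
      have hse : s = E - 1 := by omega
      have hcast : ((E:ℝ) - 1) = (s:ℝ) := by
        rw [hse]; push_cast [Nat.cast_sub hE]; ring
      rw [hcast]
      have h1 : (1:ℝ) ≤ 4 ^ ((Rb.filter (fun n => s ≤ n)).card + 1) :=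
        one_le_pow₀ (by norm_num)
      nlinarith [Nat.cast_nonneg (α := ℝ) s]
    | succ d ih =>
      intro s hd hs hmem
      by_cases hse : s = E - 1
      · have hcast : ((E:ℝ) - 1) = (s:ℝ) := by
          rw [hse]; push_cast [Nat.cast_sub hE]; ring
        rw [hcast]
        have h1 : (1:ℝ) ≤ 4 ^ ((Rb.filter (fun n => s ≤ n)).card + 1) :=
          one_le_pow₀ (by norm_num)
        nlinarith [Nat.cast_nonneg (α := ℝ) s]
      · have hslt : s < E - 1 := by omega
        have hsK : 0 ≤ (s:ℝ) + K := by positivity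
        have hpows : (0:ℝ) ≤ 4 ^ ((Rb.filter (fun n => s ≤ n)).card) := by positivity
        have hnotM := hNoM s hslt
        simp only [Set.mem_Ico, not_and, not_lt] at hnotM
        by_cases hL : theta α s < 1/3
        · -- L-run
          obtain ⟨t, hst, htE, htb, hcases⟩ := runL s hslt hL
          rcases hcases with hend | ⟨htR, htRb⟩
          · -- the L-run reaches the exit: E - 1 = t ≤ 2s + K
            have hcast : ((E:ℝ) - 1) = (t:ℝ) := by
              rw [hend]; push_cast [Nat.cast_sub hE]; ring
            have h4 : (4:ℝ) ≤ 4 ^ ((Rb.filter (fun n => s ≤ n)).card + 1) :=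
              le_self_pow₀ (by norm_num) (by omega)
            rw [hcast]
            nlinarith
          · -- followed by an R-run
            have htlt : t < E - 1 := by
              rcases Nat.lt_or_ge t (E-1) with h | h
              · exact h
              · exfalso
                have : t = E - 1 := by omega
                rw [this] at htR
                exact absurd hMexit.2 (not_lt.mpr htR.1)
            obtain ⟨u, htu, huE, hub, hunotR⟩ := runR t htlt htR
            have hrec := ih u (by omega) huE (fun h => absurd h hunotR)
            have hcard : (Rb.filter (fun n => u ≤ n)).card + 1
                ≤ (Rb.filter (fun n => s ≤ n)).card :=
              cardlt s u t htRb (by omega) htu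
            have hpow : (4:ℝ) ^ ((Rb.filter (fun n => u ≤ n)).card + 1)
                ≤ 4 ^ ((Rb.filter (fun n => s ≤ n)).card) :=
              pow_le_pow_right₀ (by norm_num) hcard
            have huK : (u:ℝ) + K ≤ 4 * ((s:ℝ) + K) := by
              have : (u:ℝ) ≤ 2 * t + K := hub
              have : (t:ℝ) ≤ 2 * s + K := htb
              linarith
            have huK0 : 0 ≤ (u:ℝ) + K := by positivity
            calc ((E:ℝ) - 1) ≤ 4 ^ ((Rb.filter (fun n => u ≤ n)).card + 1) * ((u:ℝ) + K) := hrec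
            _ ≤ 4 ^ ((Rb.filter (fun n => s ≤ n)).card) * (4 * ((s:ℝ) + K)) :=
                mul_le_mul hpow huK huK0 hpows
            _ = 4 ^ ((Rb.filter (fun n => s ≤ n)).card + 1) * ((s:ℝ) + K) := by
                rw [pow_succ]; ring
        · -- R-run
          have hθR : theta α s ∈ Set.Ico (2/3 : ℝ) 1 := ⟨hnotM (by linarith), ht1 s⟩
          have hsRb : s ∈ Rb := hmem hθR
          obtain ⟨u, hsu, huE, hub, hunotR⟩ := runR s hslt hθR
          have hrec := ih u (by omega) huE (fun h => absurd h hunotR)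
          have hcard : (Rb.filter (fun n => u ≤ n)).card + 1
              ≤ (Rb.filter (fun n => s ≤ n)).card :=
            cardlt s u s hsRb (le_refl s) hsu
          have hpow : (4:ℝ) ^ ((Rb.filter (fun n => u ≤ n)).card + 1)
              ≤ 4 ^ ((Rb.filter (fun n => s ≤ n)).card) :=
            pow_le_pow_right₀ (by norm_num) hcard
          have huK : (u:ℝ) + K ≤ 4 * ((s:ℝ) + K) := by
            have : (u:ℝ) ≤ 2 * s + K := hub
            have hs0 : (0:ℝ) ≤ (s:ℝ) := Nat.cast_nonneg s
            linarith
          have huK0 : 0 ≤ (u:ℝ) + K := by positivity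
          calc ((E:ℝ) - 1) ≤ 4 ^ ((Rb.filter (fun n => u ≤ n)).card + 1) * ((u:ℝ) + K) := hrec
          _ ≤ 4 ^ ((Rb.filter (fun n => s ≤ n)).card) * (4 * ((s:ℝ) + K)) :=
              mul_le_mul hpow huK huK0 hpows
          _ = 4 ^ ((Rb.filter (fun n => s ≤ n)).card + 1) * ((s:ℝ) + K) := by
              rw [pow_succ]; ring
  -- apply at s = 0
  have h0mem : theta α 0 ∈ Set.Ico (2/3 : ℝ) 1 → 0 ∈ Rb := by
    intro h
    exact (hRb 0).mpr ⟨by omega, h, Or.inl rfl⟩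
  have hmain := main (E - 1) 0 (by omega) (by omega) h0mem
  have hfilter : Rb.filter (fun n => 0 ≤ n) = Rb :=
    Finset.filter_true_of_mem (fun x _ => Nat.zero_le x)
  rw [hfilter] at hmain
  -- K ≤ 2 + logb 3 H
  have hlogH : 0 ≤ Real.logb 3 (H:ℝ) := Real.logb_nonneg h31 hH1'
  have hKle : K ≤ Real.logb 3 (H:ℝ) + 2 := by
    have h4 : Real.logb 3 (4:ℝ) ≤ 2 := by
      have h9 : Real.logb 3 (9:ℝ) = 2 := by
        have : (9:ℝ) = 3 ^ (2:ℕ) := by norm_num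
        rw [this, Real.logb_pow, Real.logb_self_eq_one h31]
        norm_num
      calc Real.logb 3 (4:ℝ) ≤ Real.logb 3 (9:ℝ) :=
        (Real.logb_le_logb h31 (by norm_num) (by norm_num)).mpr (by norm_num)
      _ = 2 := h9
    rw [hK, Real.logb_mul (by norm_num) (by positivity)]
    linarith
  have hpowle : (4:ℝ) ^ (Rb.card + 1) ≤ 4 ^ (B₀ + 1) :=
    pow_le_pow_right₀ (by norm_num) (by omega)
  have hpowpos : (0:ℝ) < 4 ^ (Rb.card + 1) := by positivity
  have hfin : ((E:ℝ) - 1) ≤ 4 ^ (B₀ + 1) * (Real.logb 3 (H:ℝ) + 2) := by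
    calc ((E:ℝ) - 1) ≤ 4 ^ (Rb.card + 1) * (((0:ℕ):ℝ) + K) := hmain
    _ = 4 ^ (Rb.card + 1) * ((0:ℝ) + K) := by norm_num
    _ = 4 ^ (Rb.card + 1) * K := by ring
    _ ≤ 4 ^ (B₀ + 1) * (Real.logb 3 (H:ℝ) + 2) := by
        apply mul_le_mul hpowle ?_ hK0 (by positivity)
        linarith
  linarith
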